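/- arXiv:1302.5991 — 2 statements merged into one kernel-verified Lean document; each statement's English description precedes it below -/
import Mathlib

section
/- If N = q^k * n^2 is an odd perfect number in Eulerian form, then σ(n) ≠ q^k. -/
/-- The sum-of-divisors function. -/
def sigma (n : ℕ) : ℕ := ∑ d ∈ n.divisors, d

/-- The abundancy index as a rational number. -/
noncomputable def Iq (x : ℕ) : ℚ := (sigma x : ℚ) / x

/-- The abundancy index as a real number. -/
noncomputable def Ir (x : ℕ) : ℝ := (sigma x : ℝ) / x

private lemma sigma_mul' {a b : ℕ} (h : Nat.Coprime a b) :
    sigma (a * b) = sigma a * sigma b :=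
  Nat.Coprime.sum_divisors_mul h

private lemma sigma_prime_pow {p : ℕ} (hp : p.Prime) (i : ℕ) :
    sigma (p ^ i) = ∑ j ∈ Finset.range (i + 1), p ^ j := by
  rw [sigma, ← ArithmeticFunction.sigma_one_apply,
    ArithmeticFunction.sigma_one_apply_prime_pow hp]

/-- Geometric-sum identity in ℕ. -/
private lemma geom_id (p c : ℕ) :
    (∑ i ∈ Finset.range (c + 1), p ^ i) * (1 + p ^ (c + 1))
      = (∑ i ∈ Finset.range (2 * c + 1), p ^ i) + p ^ (2 * c + 1) := by
  have h1 := Finset.sum_range_add (fun i => p ^ i) (c + 1) (c + 1)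
  calc (∑ i ∈ Finset.range (c + 1), p ^ i) * (1 + p ^ (c + 1))
      = (∑ i ∈ Finset.range (c + 1), p ^ i)
          + ∑ i ∈ Finset.range (c + 1), p ^ ((c + 1) + i) := by
        rw [mul_add, mul_one, Finset.sum_mul]
        congr 1
        apply Finset.sum_congr rfl
        intro i _
        rw [← pow_add, add_comm i (c + 1)]
    _ = ∑ i ∈ Finset.range ((c + 1) + (c + 1)), p ^ i := h1.symm
    _ = (∑ i ∈ Finset.range (2 * c + 1), p ^ i) + p ^ (2 * c + 1) := by
        have h2 : (c + 1) + (c + 1) = (2 * c + 1) + 1 := by ring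
        rw [h2, Finset.sum_range_succ]

private lemma key_not_dvd {q p c : ℕ} (hq : q.Prime) (hqp : ¬ q ∣ p)
    (h1 : q ∣ ∑ i ∈ Finset.range (c + 1), p ^ i) :
    ¬ q ∣ ∑ i ∈ Finset.range (2 * c + 1), p ^ i := by
  intro h2
  have hid := geom_id p c
  have hd : q ∣ (∑ i ∈ Finset.range (2 * c + 1), p ^ i) + p ^ (2 * c + 1) := by
    rw [← hid]; exact h1.mul_right _
  have : q ∣ p ^ (2 * c + 1) := (Nat.dvd_add_right h2).mp hd
  exact hqp (hq.dvd_of_dvd_pow this)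

private lemma exists_prime_dvd_sigma {q : ℕ} (hq : q.Prime) :
    ∀ m : ℕ, m ≠ 0 → q ∣ sigma m →
      ∃ p, p.Prime ∧ p ∣ m ∧ q ∣ sigma (p ^ m.factorization p) := by
  intro m
  induction m using Nat.strong_induction_on with
  | _ m ih =>
    intro hm0 hdvd
    rcases eq_or_ne m 1 with rfl | hm1
    · simp [sigma] at hdvd
      exact absurd hdvd hq.ne_one
    · set p := m.minFac with hp_def
      have hp : p.Prime := Nat.minFac_prime hm1
      have hpm : p ∣ m := Nat.minFac_dvd m
      set c := m.factorization p with hc_def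
      have hc1 : 1 ≤ c := (Nat.Prime.factorization_pos_of_dvd hp hm0 hpm)
      have hsplit : p ^ c * (m / p ^ c) = m := Nat.ordProj_mul_ordCompl_eq_self m p
      have hcop : Nat.Coprime (p ^ c) (m / p ^ c) :=
        Nat.Coprime.pow_left _ (Nat.coprime_ordCompl hp hm0)
      have hsig : sigma m = sigma (p ^ c) * sigma (m / p ^ c) := by
        conv_lhs => rw [← hsplit]
        exact sigma_mul' hcop
      rw [hsig] at hdvd
      rcases (Nat.Prime.dvd_mul hq).mp hdvd with h | h
      · exact ⟨p, hp, hpm, h⟩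
      · have hm'0 : m / p ^ c ≠ 0 := (Nat.ordCompl_pos p hm0).ne'
        have hm'lt : m / p ^ c < m := by
          apply Nat.div_lt_self (Nat.pos_of_ne_zero hm0)
          exact Nat.one_lt_pow (by omega) hp.one_lt
        obtain ⟨p', hp', hp'd, hp'sig⟩ := ih _ hm'lt hm'0 h
        have hp'p : p' ≠ p := by
          intro hpp
          subst hpp
          exact Nat.not_dvd_ordCompl hp hm0 hp'd
        have hfac : (m / p ^ c).factorization p' = m.factorization p' := by
          rw [hc_def, Nat.factorization_ordCompl m p, Finsupp.erase_ne hp'p]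
        have hdm : m / p ^ c ∣ m := ⟨p ^ c, by rw [mul_comm]; exact hsplit.symm⟩
        refine ⟨p', hp', hp'd.trans hdm, ?_⟩
        rw [← hfac]
        exact hp'sig

theorem stmt4 (q k n N : ℕ)
    (hq : Nat.Prime q) (hq4 : q % 4 = 1) (hk4 : k % 4 = 1)
    (hco : Nat.Coprime q n) (hN : N = q ^ k * n ^ 2)
    (hodd : Odd N) (hperf : sigma N = 2 * N) :
    sigma n ≠ q ^ k := by
  intro h
  have hk1 : 1 ≤ k := by omega
  have hq2 : q ≠ 2 := by rintro rfl; omega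
  have hn0 : n ≠ 0 := by
    rintro rfl
    simp [Nat.Coprime] at hco
    exact hq.ne_one hco
  -- q does not divide sigma (q ^ k)
  have hqsig : ¬ q ∣ sigma (q ^ k) := by
    rw [sigma_prime_pow hq, Finset.sum_range_succ']
    intro hdvd
    have hdvd' : q ∣ ∑ i ∈ Finset.range k, q ^ (i + 1) :=
      Finset.dvd_sum fun i _ => dvd_pow_self q (Nat.succ_ne_zero i)
    have : q ∣ q ^ 0 := (Nat.dvd_add_right hdvd').mp hdvd
    simp at this
    exact hq.ne_one this
  -- q divides sigma (n ^ 2)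
  have hqn2 : q ∣ sigma (n ^ 2) := by
    have hcop : Nat.Coprime (q ^ k) (n ^ 2) := (hco.pow_right 2).pow_left k
    have hs : sigma (q ^ k) * sigma (n ^ 2) = 2 * (q ^ k * n ^ 2) := by
      rw [← sigma_mul' hcop, ← hN, hperf, hN]
    have hqd : q ∣ sigma (q ^ k) * sigma (n ^ 2) := by
      rw [hs]
      exact ((dvd_pow_self q (by omega : k ≠ 0)).mul_right (n ^ 2)).mul_left 2
    rcases (Nat.Prime.dvd_mul hq).mp hqd with h' | h'
    · exact absurd h' hqsig
    · exact h'
  have hn20 : n ^ 2 ≠ 0 := pow_ne_zero 2 hn0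
  obtain ⟨p, hp, hpn2, hpsig⟩ := exists_prime_dvd_sigma hq (n ^ 2) hn20 hqn2
  have hpn : p ∣ n := hp.dvd_of_dvd_pow hpn2
  set c := n.factorization p with hc_def
  have hc1 : 1 ≤ c := Nat.Prime.factorization_pos_of_dvd hp hn0 hpn
  have hfac2 : (n ^ 2).factorization p = 2 * c := by
    rw [Nat.factorization_pow]; simp [hc_def, mul_comm]
  -- q does not divide p
  have hqp : ¬ q ∣ p := by
    intro hd
    have : q = p := (Nat.prime_dvd_prime_iff_eq hq hp).mp hd
    subst this
    exact hq.ne_one (hco.eq_one_of_dvd hpn)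
  -- from h : sigma n = q ^ k, q ∣ sigma (p ^ c)
  have hqpc : q ∣ sigma (p ^ c) := by
    have hsplit : p ^ c * (n / p ^ c) = n := Nat.ordProj_mul_ordCompl_eq_self n p
    have hcop : Nat.Coprime (p ^ c) (n / p ^ c) :=
      Nat.Coprime.pow_left _ (Nat.coprime_ordCompl hp hn0)
    have hsig : sigma n = sigma (p ^ c) * sigma (n / p ^ c) := by
      conv_lhs => rw [← hsplit]
      exact sigma_mul' hcop
    have hdvd : sigma (p ^ c) ∣ q ^ k := h ▸ hsig ▸ Dvd.intro _ rfl
    obtain ⟨e, he, hee⟩ := (Nat.dvd_prime_pow hq).mp hdvd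
    have hgt1 : 1 < sigma (p ^ c) := by
      rw [sigma_prime_pow hp]
      calc 1 < 1 + p := by have := hp.two_le; omega
        _ = p ^ 0 + p ^ 1 := by ring
        _ ≤ ∑ i ∈ Finset.range (c + 1), p ^ i := by
            have : ∑ i ∈ Finset.range 2, p ^ i ≤ ∑ i ∈ Finset.range (c + 1), p ^ i := by
              apply Finset.sum_le_sum_of_subset
              exact Finset.range_subset_range.mpr (by omega)
            simpa [Finset.sum_range_succ] using this
    have he1 : e ≠ 0 := by
      rintro rfl
      rw [pow_zero] at hee
      omega
    rw [hee]
    exact dvd_pow_self q he1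
  -- contradiction via key lemma
  rw [sigma_prime_pow hp] at hqpc
  have hnot := key_not_dvd hq hqp hqpc
  rw [hfac2, sigma_prime_pow hp] at hpsig
  exact hnot (by simpa using hpsig)
end

section
/- If N = q^k * n^2 is an odd perfect number in Eulerian form, then n < q if and only if N < q^3. -/
lemma sigma_eq_arith (x : ℕ) : sigma x = ArithmeticFunction.sigma 1 x := by
  rw [ArithmeticFunction.sigma_one_apply]; rfl

theorem stmt6 (q k n N : ℕ)
    (hq : Nat.Prime q) (hq4 : q % 4 = 1) (hk4 : k % 4 = 1)
    (hco : Nat.Coprime q n) (hN : N = q ^ k * n ^ 2)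
    (hodd : Odd N) (hperf : sigma N = 2 * N) :
    n < q ↔ N < q ^ 3 := by
  have hq2 := hq.two_le
  have hn0 : n ≠ 0 := by
    rintro rfl
    simp [hN] at hodd
  constructor
  · intro hnq
    by_cases hk1 : k = 1
    · subst hk1
      rw [hN, pow_one]
      calc q * n ^ 2 < q * q ^ 2 := by
            have : n ^ 2 < q ^ 2 := Nat.pow_lt_pow_left hnq (by norm_num)
            exact Nat.mul_lt_mul_of_le_of_lt (le_refl q) this (by omega)
        _ = q ^ 3 := by ring
    · exfalso
      have hk5 : 5 ≤ k := by omega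
      set S := ArithmeticFunction.sigma 1 with hS
      have hmul : S N = S (q ^ k) * S (n ^ 2) := by
        rw [hN]
        exact ArithmeticFunction.isMultiplicative_sigma.map_mul_of_coprime
          (Nat.Coprime.pow _ _ hco)
      have hSq : S (q ^ k) = ∑ i ∈ Finset.range (k + 1), q ^ i := by
        rw [hS, ArithmeticFunction.sigma_one_apply, Nat.sum_divisors_prime_pow hq]
      have hgeo : S (q ^ k) = q * (∑ i ∈ Finset.range k, q ^ i) + 1 := by
        rw [hSq, geom_sum_succ]
      have hcop : Nat.Coprime q (S (q ^ k)) := by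
        rw [hgeo, add_comm]
        exact (Nat.coprime_add_mul_left_right q 1 _).mpr (Nat.coprime_one_right q)
      have hdvd : S (q ^ k) ∣ q ^ k * (2 * n ^ 2) := by
        have hh : S N = 2 * N := by rw [← sigma_eq_arith]; exact hperf
        rw [hmul] at hh
        exact ⟨S (n ^ 2), by rw [hh, hN]; ring⟩
      have hdvd2 : S (q ^ k) ∣ 2 * n ^ 2 :=
        ((Nat.Coprime.pow_left k hcop).symm).dvd_of_dvd_mul_left hdvd
      have hle : S (q ^ k) ≤ 2 * n ^ 2 :=
        Nat.le_of_dvd (by positivity) hdvd2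
      -- lower bound on S (q^k)
      have hlb : q ^ k + 1 ≤ S (q ^ k) := by
        rw [hgeo]
        have ht : q ^ (k - 1) ≤ ∑ i ∈ Finset.range k, q ^ i := by
          apply Finset.single_le_sum (f := fun i => q ^ i)
          · intro i _; positivity
          · simp; omega
        have : q * q ^ (k - 1) ≤ q * ∑ i ∈ Finset.range k, q ^ i :=
          Nat.mul_le_mul_left q ht
        have hqk : q * q ^ (k - 1) = q ^ k := by
          rw [← pow_succ']
          congr 1
          omega
        omega
      -- upper bound : 2 * n^2 < q^k
      have hub : 2 * n ^ 2 < q ^ k := by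
        have h1 : 2 * n ^ 2 < 2 * q ^ 2 := by
          have : n ^ 2 < q ^ 2 := Nat.pow_lt_pow_left hnq (by norm_num)
          omega
        have h2 : 2 * q ^ 2 ≤ q ^ 3 := by
          have : q ^ 3 = q * q ^ 2 := by ring
          rw [this]
          exact Nat.mul_le_mul_right _ hq2
        have h3 : q ^ 3 ≤ q ^ k := Nat.pow_le_pow_right (by omega) (by omega)
        omega
      omega
  · intro hNq3
    by_contra h
    push_neg at h
    have h1 : q ^ 3 ≤ N := by
      rw [hN]
      calc q ^ 3 = q ^ 1 * q ^ 2 := by ring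
        _ ≤ q ^ k * n ^ 2 :=
          Nat.mul_le_mul (Nat.pow_le_pow_right (by omega) (by omega))
            (Nat.pow_le_pow_left h 2)
    omega
end
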